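/- Let n ≥ 1 and 0 < α < 1/n. Let B̄ ⊂ ℝⁿ denote the closed unit ball. For each integer j ≥ 3, let f_j : B̄ → ℝ be a continuous function satisfying: 1 ≤ f_j(x) ≤ j^α for all x ∈ B̄; f_j(x) = j^α whenever ‖x‖ ≥ 1 − 1/j; and f_j(x) = 1 whenever ‖x‖ ≤ 1 − 2/j. Then for all j and all p, q ∈ B̄, the conformal distance satisfies d_{f_j}^{B̄}(p,q) ≤ 6. -/

import Mathlib

open MeasureTheory Set Filter
open scoped ENNReal

noncomputable section

/-- A path `γ : [0,1] → ℝⁿ` is piecewise `C¹` if it is continuous on `[0,1]` and, away from a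
finite set of break points, differentiable with continuous derivative. -/
def PiecewiseC1 {n : ℕ} (γ : ℝ → EuclideanSpace ℝ (Fin n)) : Prop :=
  ContinuousOn γ (Set.Icc 0 1) ∧
    ∃ s : Finset ℝ,
      (∀ t ∈ Set.Icc (0 : ℝ) 1 \ (s : Set ℝ), DifferentiableAt ℝ γ t) ∧
      ContinuousOn (deriv γ) (Set.Icc (0 : ℝ) 1 \ (s : Set ℝ))

/-- `γ` is an admissible path in `Ω` from `p` to `q`: piecewise `C¹`, taking values in `Ω`,
starting at `p` and ending at `q`. -/
def IsPathIn {n : ℕ} (Ω : Set (EuclideanSpace ℝ (Fin n))) (p q : EuclideanSpace ℝ (Fin n))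
    (γ : ℝ → EuclideanSpace ℝ (Fin n)) : Prop :=
  PiecewiseC1 γ ∧ (∀ t ∈ Set.Icc (0 : ℝ) 1, γ t ∈ Ω) ∧ γ 0 = p ∧ γ 1 = q

/-- The `f`-length of a path: `L_f(γ) = ∫₀¹ f(γ(t)) ‖γ'(t)‖ dt`. -/
def pathLen {n : ℕ} (f : EuclideanSpace ℝ (Fin n) → ℝ) (γ : ℝ → EuclideanSpace ℝ (Fin n)) : ℝ :=
  ∫ t in (0 : ℝ)..1, f (γ t) * ‖deriv γ t‖

/-- The conformal distance `d_f^Ω(p,q)`: the infimum of `f`-lengths of piecewise `C¹` paths in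
`Ω` from `p` to `q` (equal to `∞` when no such path exists). -/
def confDist {n : ℕ} (Ω : Set (EuclideanSpace ℝ (Fin n))) (f : EuclideanSpace ℝ (Fin n) → ℝ)
    (p q : EuclideanSpace ℝ (Fin n)) : ℝ≥0∞ :=
  ⨅ (γ : ℝ → EuclideanSpace ℝ (Fin n)) (_ : IsPathIn Ω p q γ), ENNReal.ofReal (pathLen f γ)


lemma half_bound {E : Type*} [NormedAddCommGroup E] [NormedSpace ℝ E]
    (f : E → ℝ) (a r : ℝ) (ha : 1 ≤ a) (hr0 : 0 < r) (hr1 : r ≤ 1)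
    (hcol : a * (1 - r) ≤ 2)
    (hge : ∀ x : E, ‖x‖ ≤ 1 → 1 ≤ f x)
    (hle : ∀ x : E, ‖x‖ ≤ 1 → f x ≤ a)
    (h1 : ∀ x : E, ‖x‖ ≤ 1 → ‖x‖ ≤ r → f x = 1)
    (hcont : ContinuousOn f (Metric.closedBall 0 1))
    (x : E) (hx : ‖x‖ ≤ 1) :
    ∫ t in (0:ℝ)..(1/2), f ((1 - 2*t) • x) * (2 * ‖x‖) ≤ 3 := by
  -- the path t ↦ (1-2t)•x maps [0,1/2] into the closed ball
  have hmem : ∀ t ∈ Icc (0:ℝ) (1/2), ‖(1 - 2*t) • x‖ ≤ 1 := by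
    intro t ht
    rw [norm_smul, Real.norm_eq_abs, abs_of_nonneg (by linarith [ht.2])]
    nlinarith [ht.1, ht.2, norm_nonneg x]
  have hpathcont : ContinuousOn (fun t : ℝ => f ((1 - 2*t) • x)) (Icc (0:ℝ) (1/2)) := by
    apply hcont.comp (Continuous.continuousOn (by continuity))
    intro t ht
    simpa [Metric.mem_closedBall, dist_eq_norm] using hmem t ht
  have hgc : ContinuousOn (fun t : ℝ => f ((1 - 2*t) • x) * (2 * ‖x‖)) (Icc (0:ℝ) (1/2)) :=
    hpathcont.mul continuousOn_const
  by_cases hcase : ‖x‖ ≤ r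
  · -- whole segment inside: f = 1
    have : ∀ t ∈ uIcc (0:ℝ) (1/2), f ((1 - 2*t) • x) * (2 * ‖x‖) = 2 * ‖x‖ := by
      intro t ht
      rw [uIcc_of_le (by norm_num)] at ht
      have hn : ‖(1 - 2*t) • x‖ ≤ r := by
        rw [norm_smul, Real.norm_eq_abs, abs_of_nonneg (by linarith [ht.2])]
        nlinarith [ht.1, ht.2, norm_nonneg x]
      rw [h1 _ (hmem t ht) hn, one_mul]
    rw [intervalIntegral.integral_congr this]
    simp only [intervalIntegral.integral_const, smul_eq_mul]
    nlinarith [norm_nonneg x]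
  · push_neg at hcase
    have hx0 : 0 < ‖x‖ := lt_trans hr0 hcase
    set t₀ : ℝ := (1 - r / ‖x‖) / 2 with ht₀def
    have hrx : r / ‖x‖ < 1 := (div_lt_one hx0).2 hcase
    have hrx0 : 0 < r / ‖x‖ := div_pos hr0 hx0
    have ht₀0 : 0 ≤ t₀ := by rw [ht₀def]; linarith
    have ht₀h : t₀ ≤ 1/2 := by rw [ht₀def]; linarith
    have hint1 : IntervalIntegrable (fun t : ℝ => f ((1 - 2*t) • x) * (2 * ‖x‖)) volume 0 t₀ := by
      apply (hgc.mono _).intervalIntegrable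
      rw [uIcc_of_le ht₀0]; exact Icc_subset_Icc le_rfl ht₀h
    have hint2 : IntervalIntegrable (fun t : ℝ => f ((1 - 2*t) • x) * (2 * ‖x‖)) volume t₀ (1/2) := by
      apply (hgc.mono _).intervalIntegrable
      rw [uIcc_of_le ht₀h]; exact Icc_subset_Icc ht₀0 le_rfl
    rw [← intervalIntegral.integral_add_adjacent_intervals hint1 hint2]
    have hb1 : ∫ t in (0:ℝ)..t₀, f ((1 - 2*t) • x) * (2 * ‖x‖) ≤ 2 := by
      have hmono : ∫ t in (0:ℝ)..t₀, f ((1 - 2*t) • x) * (2 * ‖x‖)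
          ≤ ∫ _t in (0:ℝ)..t₀, a * (2 * ‖x‖) := by
        apply intervalIntegral.integral_mono_on ht₀0 hint1 intervalIntegrable_const
        intro t ht
        have htI : t ∈ Icc (0:ℝ) (1/2) := ⟨ht.1, le_trans ht.2 ht₀h⟩
        have := hle _ (hmem t htI)
        nlinarith [norm_nonneg x]
      have h2 : ∫ _t in (0:ℝ)..t₀, a * (2 * ‖x‖) = t₀ * (a * (2 * ‖x‖)) := by
        rw [intervalIntegral.integral_const, smul_eq_mul]; ring
      rw [h2] at hmono
      have hc2 : r / ‖x‖ * ‖x‖ = r := div_mul_cancel₀ r hx0.ne'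
      have ht₀x : t₀ * (2 * ‖x‖) = ‖x‖ - r := by
        rw [ht₀def]; linear_combination -hc2
      calc ∫ t in (0:ℝ)..t₀, f ((1 - 2*t) • x) * (2 * ‖x‖) ≤ t₀ * (a * (2 * ‖x‖)) := hmono
        _ = a * (t₀ * (2 * ‖x‖)) := by ring
        _ = a * (‖x‖ - r) := by rw [ht₀x]
        _ ≤ a * (1 - r) := by nlinarith
        _ ≤ 2 := hcol
    have hb2 : ∫ t in t₀..(1/2:ℝ), f ((1 - 2*t) • x) * (2 * ‖x‖) ≤ 1 := by
      have heq : ∀ t ∈ uIcc t₀ (1/2:ℝ), f ((1 - 2*t) • x) * (2 * ‖x‖) = 2 * ‖x‖ := by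
        intro t ht
        rw [uIcc_of_le ht₀h] at ht
        have htI : t ∈ Icc (0:ℝ) (1/2) := ⟨le_trans ht₀0 ht.1, ht.2⟩
        have hn : ‖(1 - 2*t) • x‖ ≤ r := by
          rw [norm_smul, Real.norm_eq_abs, abs_of_nonneg (by linarith [htI.2])]
          have h12 : (1 - 2*t) ≤ 1 - 2*t₀ := by linarith [ht.1]
          have hc2 : r / ‖x‖ * ‖x‖ = r := div_mul_cancel₀ r hx0.ne'
          have : (1 - 2*t₀) * ‖x‖ = r := by
            rw [ht₀def]; linear_combination hc2
          nlinarith [htI.1, norm_nonneg x]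
        rw [h1 _ (hmem t htI) hn, one_mul]
      rw [intervalIntegral.integral_congr heq]
      simp only [intervalIntegral.integral_const, smul_eq_mul]
      nlinarith [norm_nonneg x]
    linarith

/-- Uniform diameter bound in the boundary-area blow-up example: for conformal factors `f_j`
on the closed unit ball equal to `j^α` on the collar `{‖x‖ ≥ 1 - 1/j}` and to `1` on
`{‖x‖ ≤ 1 - 2/j}` (with `0 < α < 1/n` and `1 ≤ f_j ≤ j^α`), the conformal distance between
any two points of the ball is at most `6`. -/
theorem confDist_le_six_area_blowup_example {n : ℕ} (hn : 1 ≤ n)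
    (α : ℝ) (hα0 : 0 < α) (hα : α < 1 / n)
    (f : ℕ → EuclideanSpace ℝ (Fin n) → ℝ)
    (hcont : ∀ j : ℕ, 3 ≤ j → ContinuousOn (f j) (Metric.closedBall 0 1))
    (hbound : ∀ j : ℕ, 3 ≤ j → ∀ x ∈ Metric.closedBall (0 : EuclideanSpace ℝ (Fin n)) 1,
      1 ≤ f j x ∧ f j x ≤ (j : ℝ) ^ α)
    (houter : ∀ j : ℕ, 3 ≤ j → ∀ x ∈ Metric.closedBall (0 : EuclideanSpace ℝ (Fin n)) 1,
      1 - 1 / (j : ℝ) ≤ ‖x‖ → f j x = (j : ℝ) ^ α)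
    (hinner : ∀ j : ℕ, 3 ≤ j → ∀ x ∈ Metric.closedBall (0 : EuclideanSpace ℝ (Fin n)) 1,
      ‖x‖ ≤ 1 - 2 / (j : ℝ) → f j x = 1) :
    ∀ j : ℕ, 3 ≤ j →
      ∀ p ∈ Metric.closedBall (0 : EuclideanSpace ℝ (Fin n)) 1,
      ∀ q ∈ Metric.closedBall (0 : EuclideanSpace ℝ (Fin n)) 1,
        confDist (Metric.closedBall 0 1) (f j) p q ≤ 6 := by
  intro j hj p hp q hq
  have hj3 : (3:ℝ) ≤ (j:ℝ) := by exact_mod_cast hj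
  have hj1 : (1:ℝ) ≤ (j:ℝ) := by linarith
  have hj0 : (0:ℝ) < (j:ℝ) := by linarith
  set a : ℝ := (j:ℝ) ^ α with hadef
  set r : ℝ := 1 - 2 / (j:ℝ) with hrdef
  have ha1 : 1 ≤ a := by
    rw [hadef]
    calc (1:ℝ) = (j:ℝ) ^ (0:ℝ) := (Real.rpow_zero _).symm
      _ ≤ (j:ℝ) ^ α := Real.rpow_le_rpow_of_exponent_le hj1 hα0.le
  have hα1 : α ≤ 1 := by
    have hn1 : (1:ℝ) ≤ (n:ℝ) := by exact_mod_cast hn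
    have : 1 / (n:ℝ) ≤ 1 := by
      rw [div_le_one (by linarith)]; exact hn1
    linarith
  have haj : a ≤ (j:ℝ) := by
    rw [hadef]
    calc (j:ℝ) ^ α ≤ (j:ℝ) ^ (1:ℝ) := Real.rpow_le_rpow_of_exponent_le hj1 hα1
      _ = (j:ℝ) := Real.rpow_one _
  have hcol : a * (1 - r) ≤ 2 := by
    rw [hrdef]
    have h1 : a * (2 / (j:ℝ)) ≤ (j:ℝ) * (2 / (j:ℝ)) :=
      mul_le_mul_of_nonneg_right haj (by positivity)
    have h2 : (j:ℝ) * (2 / (j:ℝ)) = 2 := by field_simp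
    rw [h2] at h1
    calc a * (1 - (1 - 2/(j:ℝ))) = a * (2 / (j:ℝ)) := by ring_nf
      _ ≤ 2 := h1
  have hr0 : 0 < r := by
    rw [hrdef]
    have : 2 / (j:ℝ) ≤ 2/3 := by
      apply div_le_div_of_nonneg_left (by norm_num) (by norm_num) hj3
    linarith
  have hr1 : r ≤ 1 := by
    rw [hrdef]; have : 0 ≤ 2 / (j:ℝ) := by positivity
    linarith
  have hge : ∀ x : EuclideanSpace ℝ (Fin n), ‖x‖ ≤ 1 → 1 ≤ f j x := fun x hx =>
    (hbound j hj x (mem_closedBall_zero_iff.2 hx)).1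
  have hle : ∀ x : EuclideanSpace ℝ (Fin n), ‖x‖ ≤ 1 → f j x ≤ a := fun x hx =>
    (hbound j hj x (mem_closedBall_zero_iff.2 hx)).2
  have h1 : ∀ x : EuclideanSpace ℝ (Fin n), ‖x‖ ≤ 1 → ‖x‖ ≤ r → f j x = 1 := fun x hx hxr =>
    hinner j hj x (mem_closedBall_zero_iff.2 hx) hxr
  have hfc := hcont j hj
  have hp1 : ‖p‖ ≤ 1 := mem_closedBall_zero_iff.1 hp
  have hq1 : ‖q‖ ≤ 1 := mem_closedBall_zero_iff.1 hq
  -- the path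
  set γ : ℝ → EuclideanSpace ℝ (Fin n) :=
    fun t => if t ≤ 1/2 then (1 - 2*t) • p else (2*t - 1) • q with hγdef
  have hc₁ : Continuous (fun t : ℝ => (1 - 2*t) • p) :=
    (continuous_const.sub (continuous_const.mul continuous_id)).smul continuous_const
  have hc₂ : Continuous (fun t : ℝ => (2*t - 1) • q) :=
    ((continuous_const.mul continuous_id).sub continuous_const).smul continuous_const
  have hγcont : Continuous γ := by
    apply Continuous.if_le hc₁ hc₂ continuous_id continuous_const
    intro t ht
    simp only [id_eq] at ht
    subst ht; norm_num
  have hd1 : ∀ t : ℝ, t < 1/2 → HasDerivAt γ ((-2 : ℝ) • p) t := by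
    intro t ht
    have hev : γ =ᶠ[nhds t] (fun s => (1 - 2*s) • p) := by
      filter_upwards [Iio_mem_nhds ht] with s hs
      exact if_pos hs.le
    have h0 : HasDerivAt (fun s : ℝ => 1 - 2*s) (-2) t := by
      simpa using ((hasDerivAt_id t).const_mul (2:ℝ)).const_sub 1
    exact (h0.smul_const p).congr_of_eventuallyEq hev
  have hd2 : ∀ t : ℝ, 1/2 < t → HasDerivAt γ ((2 : ℝ) • q) t := by
    intro t ht
    have hev : γ =ᶠ[nhds t] (fun s => (2*s - 1) • q) := by
      filter_upwards [Ioi_mem_nhds ht] with s hs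
      exact if_neg (not_le.2 hs)
    have h0 : HasDerivAt (fun s : ℝ => 2*s - 1) (2) t := by
      simpa using ((hasDerivAt_id t).const_mul (2:ℝ)).sub_const 1
    exact (h0.smul_const q).congr_of_eventuallyEq hev
  have hγpath : IsPathIn (Metric.closedBall 0 1) p q γ := by
    refine ⟨⟨hγcont.continuousOn, {1/2}, ?_, ?_⟩, ?_, ?_, ?_⟩
    · intro t ht
      have hne : t ≠ 1/2 := by simpa using ht.2
      rcases hne.lt_or_gt with h | h
      · exact (hd1 t h).differentiableAt
      · exact (hd2 t h).differentiableAt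
    · intro t ht
      have hne : t ≠ 1/2 := by simpa using ht.2
      rcases hne.lt_or_gt with h | h
      · have hev : deriv γ =ᶠ[nhds t] (fun _ => (-2 : ℝ) • p) := by
          filter_upwards [Iio_mem_nhds h] with s hs
          exact (hd1 s hs).deriv
        exact hev.continuousAt.continuousWithinAt
      · have hev : deriv γ =ᶠ[nhds t] (fun _ => (2 : ℝ) • q) := by
          filter_upwards [Ioi_mem_nhds h] with s hs
          exact (hd2 s hs).deriv
        exact hev.continuousAt.continuousWithinAt
    · intro t ht
      rw [mem_closedBall_zero_iff]
      by_cases h : t ≤ 1/2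
      · rw [hγdef]; simp only [if_pos h]
        rw [norm_smul, Real.norm_eq_abs, abs_of_nonneg (by linarith [ht.1])]
        nlinarith [ht.1, norm_nonneg p]
      · push_neg at h
        rw [hγdef]; simp only [if_neg (not_le.2 h)]
        rw [norm_smul, Real.norm_eq_abs, abs_of_nonneg (by linarith)]
        nlinarith [ht.2, norm_nonneg q]
    · rw [hγdef]; norm_num
    · rw [hγdef]; norm_num
  -- the two half-integrands
  set h₁ : ℝ → ℝ := fun t => f j ((1 - 2*t) • p) * (2 * ‖p‖) with hh₁def
  set k : ℝ → ℝ := fun t => f j ((1 - 2*t) • q) * (2 * ‖q‖) with hkdef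
  have hsegcont : ∀ x : EuclideanSpace ℝ (Fin n), ‖x‖ ≤ 1 →
      ContinuousOn (fun t : ℝ => f j ((1 - 2*t) • x) * (2 * ‖x‖)) (Icc (0:ℝ) (1/2)) := by
    intro x hx
    apply ContinuousOn.mul _ continuousOn_const
    have hcx : Continuous (fun t : ℝ => (1 - 2*t) • x) :=
      (continuous_const.sub (continuous_const.mul continuous_id)).smul continuous_const
    apply hfc.comp hcx.continuousOn
    intro t ht
    rw [mem_closedBall_zero_iff, norm_smul, Real.norm_eq_abs,
      abs_of_nonneg (by linarith [ht.2])]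
    nlinarith [ht.1, ht.2, norm_nonneg x]
  have hI₁ : IntervalIntegrable h₁ volume 0 (1/2) := by
    apply ContinuousOn.intervalIntegrable
    rw [uIcc_of_le (by norm_num)]
    exact hsegcont p hp1
  have hIk : IntervalIntegrable k volume 0 (1/2) := by
    apply ContinuousOn.intervalIntegrable
    rw [uIcc_of_le (by norm_num)]
    exact hsegcont q hq1
  -- a.e. identification of the integrand on each half
  have hae : ∀ᵐ t : ℝ ∂volume, t ≠ 1/2 := by
    have h0 : (volume : Measure ℝ) {(1/2 : ℝ)} = 0 := measure_singleton _
    exact eventually_of_mem (compl_mem_ae_iff.mpr h0) (fun t ht => ht)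
  have heq1 : ∀ t : ℝ, t < 1/2 → f j (γ t) * ‖deriv γ t‖ = h₁ t := by
    intro t ht
    rw [(hd1 t ht).deriv, hγdef]
    simp only [if_pos ht.le, hh₁def]
    rw [norm_smul]
    norm_num
  have heq2 : ∀ t : ℝ, 1/2 < t → f j (γ t) * ‖deriv γ t‖ = k (1 - t) := by
    intro t ht
    rw [(hd2 t ht).deriv, hγdef]
    simp only [if_neg (not_le.2 ht), hkdef]
    rw [norm_smul]
    have : (1 - 2*(1-t)) • q = (2*t - 1) • q := by congr 1; ring
    rw [this]
    norm_num
  -- integrability of the actual integrand on each half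
  have hIF1 : IntervalIntegrable (fun t => f j (γ t) * ‖deriv γ t‖) volume 0 (1/2) := by
    rw [intervalIntegrable_iff_integrableOn_Ioc_of_le (by norm_num)]
    apply ((intervalIntegrable_iff_integrableOn_Ioc_of_le (by norm_num)).1 hI₁).congr_fun_ae
    filter_upwards [ae_restrict_of_ae (μ := volume) (s := Ioc (0:ℝ) (1/2)) hae,
      ae_restrict_mem measurableSet_Ioc] with t ht htm
    exact (heq1 t (lt_of_le_of_ne htm.2 ht)).symm
  have hIF2 : IntervalIntegrable (fun t => f j (γ t) * ‖deriv γ t‖) volume (1/2) 1 := by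
    have hIk2 : IntervalIntegrable (fun t : ℝ => k (1 - t)) volume (1 - 1/2) (1 - 0) :=
      (hIk.comp_sub_left 1).symm
    norm_num at hIk2
    apply hIk2.congr
    intro t htm
    rw [uIoc_of_le (by norm_num)] at htm
    exact (heq2 t htm.1).symm
  -- the length bound
  have hhalf1 : ∫ t in (0:ℝ)..(1/2), h₁ t ≤ 3 :=
    half_bound (f j) a r ha1 hr0 hr1 hcol hge hle h1 hfc p hp1
  have hhalfk : ∫ t in (0:ℝ)..(1/2), k t ≤ 3 :=
    half_bound (f j) a r ha1 hr0 hr1 hcol hge hle h1 hfc q hq1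
  have hlen : pathLen (f j) γ ≤ 6 := by
    rw [pathLen]
    rw [← intervalIntegral.integral_add_adjacent_intervals hIF1 hIF2]
    have hpart1 : ∫ t in (0:ℝ)..(1/2), f j (γ t) * ‖deriv γ t‖ = ∫ t in (0:ℝ)..(1/2), h₁ t := by
      apply intervalIntegral.integral_congr_ae
      filter_upwards [hae] with t ht htm
      rw [uIoc_of_le (by norm_num)] at htm
      exact heq1 t (lt_of_le_of_ne htm.2 ht)
    have hpart2 : ∫ t in (1/2:ℝ)..1, f j (γ t) * ‖deriv γ t‖ = ∫ t in (0:ℝ)..(1/2), k t := by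
      have e1 : ∫ t in (1/2:ℝ)..1, f j (γ t) * ‖deriv γ t‖ = ∫ t in (1/2:ℝ)..1, k (1 - t) := by
        apply intervalIntegral.integral_congr_ae
        apply Filter.Eventually.of_forall
        intro t htm
        rw [uIoc_of_le (by norm_num)] at htm
        exact heq2 t htm.1
      have e2 : ∫ t in (1/2:ℝ)..1, k (1 - t) = ∫ t in (1-1:ℝ)..(1-1/2), k t :=
        intervalIntegral.integral_comp_sub_left k 1
      rw [e1, e2]; norm_num
    rw [hpart1, hpart2]
    linarith
  calc confDist (Metric.closedBall 0 1) (f j) p q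
      ≤ ENNReal.ofReal (pathLen (f j) γ) := iInf₂_le γ hγpath
    _ ≤ ENNReal.ofReal 6 := ENNReal.ofReal_le_ofReal hlen
    _ = 6 := by norm_num
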